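/- For the generalized Gaussian family with β even, the skewness tensor component T₂₂₂ = E[(∂_σ l)³] equals 2β²/σ³. -/

import Mathlib

open MeasureTheory

/-- The generalized Gaussian density. -/
noncomputable def genGaussPdf (β : ℕ) (μ σ x : ℝ) : ℝ :=
  (β : ℝ) / (2 * σ * Real.Gamma (1 / (β : ℝ))) * Real.exp (-(x - μ) ^ β / σ ^ β)

/-- The log-likelihood `l = log f`. -/
noncomputable def genGaussLogLik (β : ℕ) (μ σ x : ℝ) : ℝ :=
  Real.log (genGaussPdf β μ σ x)

open Real Set

lemma momIntOn (β k : ℕ) (hβpos : 0 < β) {σ : ℝ} (hσ : 0 < σ) :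
    IntegrableOn (fun x : ℝ => x ^ (k * β) * Real.exp (-x ^ β / σ ^ β)) (Ioi 0) := by
  have hb : (0:ℝ) < (σ ^ β)⁻¹ := by positivity
  have := integrableOn_rpow_mul_exp_neg_mul_rpow (p := (β:ℝ)) (s := ((k*β : ℕ):ℝ))
    (b := (σ ^ β)⁻¹) (lt_of_lt_of_le neg_one_lt_zero (by positivity)) (by exact_mod_cast hβpos) hb
  refine this.congr_fun (fun x hx => ?_) measurableSet_Ioi
  dsimp only
  rw [Real.rpow_natCast, Real.rpow_natCast]
  congr 1
  field_simp

lemma momIntegrable (β k : ℕ) (hβeven : Even β) (hβpos : 0 < β) {σ : ℝ} (hσ : 0 < σ) :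
    Integrable (fun x : ℝ => x ^ (k * β) * Real.exp (-x ^ β / σ ^ β)) := by
  have heq : ∀ x : ℝ, (-x) ^ (k * β) * Real.exp (-(-x) ^ β / σ ^ β)
      = x ^ (k * β) * Real.exp (-x ^ β / σ ^ β) := by
    intro x
    rw [(hβeven.mul_left k).neg_pow, hβeven.neg_pow]
  rw [← integrableOn_univ, ← @Iio_union_Ici _ _ (0 : ℝ), integrableOn_union,
    integrableOn_Ici_iff_integrableOn_Ioi]
  refine ⟨?_, momIntOn β k hβpos hσ⟩
  rw [← (Measure.measurePreserving_neg (volume : Measure ℝ)).integrableOn_comp_preimage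
      (Homeomorph.neg ℝ).measurableEmbedding]
  simp only [Function.comp_def, neg_preimage, neg_Iio, neg_zero]
  refine (momIntOn β k hβpos hσ).congr_fun
    (fun x _ => (heq x).symm) measurableSet_Ioi

lemma momVal (β k : ℕ) (hβeven : Even β) (hβpos : 0 < β) {μ σ : ℝ} (hσ : 0 < σ) :
    ∫ x : ℝ, (x - μ) ^ (k * β) * Real.exp (-(x - μ) ^ β / σ ^ β)
      = 2 / β * σ ^ (k * β + 1) * Real.Gamma ((k : ℝ) + 1 / β) := by
  have hβR : (0:ℝ) < β := by exact_mod_cast hβpos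
  rw [integral_sub_right_eq_self (fun y : ℝ => y ^ (k * β) * Real.exp (-y ^ β / σ ^ β)) μ]
  have habs : (fun y : ℝ => y ^ (k * β) * Real.exp (-y ^ β / σ ^ β))
      = fun y : ℝ => |y| ^ (k * β) * Real.exp (-|y| ^ β / σ ^ β) := by
    funext y
    rw [(hβeven.mul_left k).pow_abs, hβeven.pow_abs]
  rw [habs, integral_comp_abs (f := fun y : ℝ => y ^ (k * β) * Real.exp (-y ^ β / σ ^ β))]
  have hb : (0:ℝ) < (σ ^ β)⁻¹ := by positivity
  have hrw : ∫ x in Ioi (0:ℝ), x ^ (k * β) * Real.exp (-x ^ β / σ ^ β)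
      = ∫ x in Ioi (0:ℝ), x ^ ((k*β : ℕ):ℝ) * Real.exp (-(σ ^ β)⁻¹ * x ^ ((β:ℕ):ℝ)) := by
    refine setIntegral_congr_fun measurableSet_Ioi (fun x hx => ?_)
    rw [Real.rpow_natCast, Real.rpow_natCast]
    congr 1
    field_simp
  rw [hrw, integral_rpow_mul_exp_neg_mul_rpow hβR
    (lt_of_lt_of_le neg_one_lt_zero (by positivity)) hb]
  have h1 : (((k*β : ℕ):ℝ) + 1) / (β:ℝ) = (k : ℝ) + 1 / β := by
    push_cast; field_simp
  have h2 : ((σ ^ β)⁻¹ : ℝ) ^ (-(((k*β : ℕ):ℝ) + 1) / (β:ℝ)) = σ ^ (k * β + 1) := by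
    rw [← Real.rpow_natCast σ β, ← Real.rpow_neg_one, ← Real.rpow_natCast σ (k*β+1),
      ← Real.rpow_mul hσ.le, ← Real.rpow_mul hσ.le]
    congr 1
    push_cast
    have : (β:ℝ) ≠ 0 := hβR.ne'
    field_simp
  rw [h1, h2]
  ring

lemma derivLogLik (β : ℕ) (hβpos : 0 < β) (μ : ℝ) {σ : ℝ} (hσ : 0 < σ) (x : ℝ) :
    deriv (fun s => genGaussLogLik β μ s x) σ
      = -σ⁻¹ + (β : ℝ) * (x - μ) ^ β / (σ ^ β * σ) := by
  have hβR : (0:ℝ) < β := by exact_mod_cast hβpos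
  have hΓ : 0 < Real.Gamma (1 / (β:ℝ)) := Real.Gamma_pos_of_pos (by positivity)
  set c : ℝ := (x - μ) ^ β with hc
  set C : ℝ := Real.log β - Real.log 2 - Real.log (Real.Gamma (1 / (β:ℝ))) with hC
  have hev : (fun s => genGaussLogLik β μ s x)
      =ᶠ[nhds σ] fun s => C - Real.log s - c * (s ^ β)⁻¹ := by
    filter_upwards [isOpen_Ioi.mem_nhds (Set.mem_Ioi.mpr hσ)] with s hs
    have hs0 : (0:ℝ) < s := hs
    unfold genGaussLogLik genGaussPdf
    rw [Real.log_mul (by positivity) (Real.exp_ne_zero _), Real.log_exp,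
      Real.log_div hβR.ne' (by positivity), Real.log_mul (by positivity) hΓ.ne',
      Real.log_mul two_ne_zero hs0.ne']
    rw [hC, ← hc]
    field_simp
    ring
  rw [hev.deriv_eq]
  have h1 : HasDerivAt (fun s : ℝ => C - Real.log s - c * (s ^ β)⁻¹)
      (0 - σ⁻¹ - c * (-(β * σ ^ (β - 1)) / (σ ^ β) ^ 2)) σ := by
    exact (((hasDerivAt_const σ C).sub (Real.hasDerivAt_log hσ.ne')).sub
      (((hasDerivAt_pow β σ).inv (pow_ne_zero β hσ.ne')).const_mul c))
  rw [h1.deriv]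
  have hpow : σ ^ (β - 1) * σ = σ ^ β := by
    rw [← pow_succ]; congr 1; omega
  field_simp
  rw [← hpow]
  ring

theorem generalized_gaussian_T222
    (β : ℕ) (hβeven : Even β) (hβpos : 0 < β) (μ σ : ℝ) (hσ : 0 < σ) :
    ∫ x : ℝ, (deriv (fun s => genGaussLogLik β μ s x) σ) ^ 3 * genGaussPdf β μ σ x
      = 2 * (β : ℝ) ^ 2 / σ ^ 3 := by
  have hβR : (0:ℝ) < β := by exact_mod_cast hβpos
  have hΓ : 0 < Real.Gamma (1 / (β:ℝ)) := Real.Gamma_pos_of_pos (by positivity)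
  set Ga : ℝ := Real.Gamma (1 / (β:ℝ)) with hGa
  set K : ℝ := (β : ℝ) / (2 * σ * Ga) with hK
  set c0 : ℝ := -K / σ ^ 3 with hc0
  set c1 : ℝ := 3 * K * β / (σ ^ β * σ ^ 3) with hc1
  set c2 : ℝ := -(3 * K * (β:ℝ) ^ 2) / ((σ ^ β) ^ 2 * σ ^ 3) with hc2
  set c3 : ℝ := K * (β:ℝ) ^ 3 / ((σ ^ β) ^ 3 * σ ^ 3) with hc3
  have hS : (σ:ℝ) ^ β ≠ 0 := pow_ne_zero _ hσ.ne'
  have hptw : (fun x : ℝ => (deriv (fun s => genGaussLogLik β μ s x) σ) ^ 3 * genGaussPdf β μ σ x)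
      = fun x : ℝ => c0 * ((x - μ) ^ (0 * β) * Real.exp (-(x - μ) ^ β / σ ^ β))
        + c1 * ((x - μ) ^ (1 * β) * Real.exp (-(x - μ) ^ β / σ ^ β))
        + c2 * ((x - μ) ^ (2 * β) * Real.exp (-(x - μ) ^ β / σ ^ β))
        + c3 * ((x - μ) ^ (3 * β) * Real.exp (-(x - μ) ^ β / σ ^ β)) := by
    funext x
    rw [derivLogLik β hβpos μ hσ x]
    unfold genGaussPdf
    simp only [pow_mul']
    rw [hc0, hc1, hc2, hc3, hK, ← hGa]
    field_simp
    ring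
  rw [hptw]
  have hI : ∀ k : ℕ, Integrable (fun x : ℝ =>
      (x - μ) ^ (k * β) * Real.exp (-(x - μ) ^ β / σ ^ β)) := by
    intro k
    exact (momIntegrable β k hβeven hβpos hσ).comp_sub_right μ
  have hI01 : Integrable (fun x : ℝ =>
      c0 * ((x - μ) ^ (0 * β) * Real.exp (-(x - μ) ^ β / σ ^ β))
      + c1 * ((x - μ) ^ (1 * β) * Real.exp (-(x - μ) ^ β / σ ^ β))) :=
    ((hI 0).const_mul c0).add ((hI 1).const_mul c1)
  have hI012 : Integrable (fun x : ℝ =>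
      c0 * ((x - μ) ^ (0 * β) * Real.exp (-(x - μ) ^ β / σ ^ β))
      + c1 * ((x - μ) ^ (1 * β) * Real.exp (-(x - μ) ^ β / σ ^ β))
      + c2 * ((x - μ) ^ (2 * β) * Real.exp (-(x - μ) ^ β / σ ^ β))) :=
    hI01.add ((hI 2).const_mul c2)
  rw [integral_add hI012 ((hI 3).const_mul c3), integral_add hI01 ((hI 2).const_mul c2),
      integral_add ((hI 0).const_mul c0) ((hI 1).const_mul c1),
      integral_const_mul, integral_const_mul, integral_const_mul, integral_const_mul,
      momVal β 0 hβeven hβpos hσ, momVal β 1 hβeven hβpos hσ,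
      momVal β 2 hβeven hβpos hσ, momVal β 3 hβeven hβpos hσ]
  have ha : (1:ℝ) / β ≠ 0 := by positivity
  have hG1 : Real.Gamma ((1:ℕ) + 1 / (β:ℝ)) = 1 / β * Ga := by
    rw [Nat.cast_one, add_comm, Real.Gamma_add_one ha, hGa]
  have hG2 : Real.Gamma ((2:ℕ) + 1 / (β:ℝ)) = (1 + 1 / β) * (1 / β * Ga) := by
    rw [show ((2:ℕ):ℝ) + 1 / β = (((1:ℕ):ℝ) + 1 / β) + 1 by push_cast; ring,
      Real.Gamma_add_one (by positivity), hG1, Nat.cast_one]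
  have hG3 : Real.Gamma ((3:ℕ) + 1 / (β:ℝ)) = (2 + 1 / β) * ((1 + 1 / β) * (1 / β * Ga)) := by
    rw [show ((3:ℕ):ℝ) + 1 / β = (((2:ℕ):ℝ) + 1 / β) + 1 by push_cast; ring,
      Real.Gamma_add_one (by positivity), hG2, Nat.cast_ofNat]
  have hpw : ∀ k : ℕ, σ ^ (k * β + 1) = (σ ^ β) ^ k * σ := fun k => by
    rw [pow_succ, pow_mul']
  rw [hG1, hG2, hG3, hpw 0, hpw 1, hpw 2, hpw 3]
  rw [show ((0:ℕ):ℝ) + 1 / β = 1 / β by push_cast; ring, ← hGa]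
  rw [hc0, hc1, hc2, hc3, hK]
  field_simp
  ring
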